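/- For the root system of type C_\u2113 realized in the lattice {(a_1,...,a_\u2113) \u2208 \u2124^\u2113 : \u03a3 a_i even} with simple roots \u03b3_i = e_i - e_{i+1} (i < \u2113) and \u03b3_\u2113 = 2e_\u2113, the small dominant weights (those \u03bb with \u03bb \u2271 2\u03b3_0 for \u03b3_0 = e_1 + e_2 the highest short root) are exactly the weights (1^{2j} 0^{\u2113-2j}) for 0 \u2264 j \u2264 \u230a\u2113/2\u230b and (2, 1^{2j}, 0^{\u2113-2j-1}) for 0 \u2264 j \u2264 \u230a(\u2113-1)/2\u230b. -/

import Mathlib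

section Stmt9Aux
open Finset

lemma sum_gamma (ℓ : ℕ) (hℓ : 2 ≤ ℓ) (c : Fin ℓ → ℤ) (k : Fin ℓ) :
    (∑ i : Fin ℓ, c i *
      (if (i : ℕ) = ℓ - 1 then (if k = i then 2 else 0)
        else ((if k = i then 1 else 0) + (if (k : ℕ) = (i : ℕ) + 1 then -1 else 0))))
    = (if (k : ℕ) = ℓ - 1 then 2 else 1) * c k
      - (if 0 < (k : ℕ) then c ⟨(k : ℕ) - 1, lt_of_le_of_lt (Nat.sub_le _ _) k.isLt⟩ else 0) := by
  rcases Nat.eq_zero_or_pos (k : ℕ) with hk | hk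
  · rw [if_neg (by omega), if_neg (by omega), Finset.sum_eq_single k]
    · rw [if_neg (by omega), if_pos rfl, if_neg (by omega)]
      ring
    · intro i _ hik
      have hik' : (k : ℕ) ≠ (i : ℕ) := fun h => hik (Fin.ext h.symm)
      by_cases h : (i : ℕ) = ℓ - 1
      · rw [if_pos h, if_neg (fun h' => hik (Fin.ext (congrArg Fin.val h').symm)), mul_zero]
      · rw [if_neg h, if_neg (fun h' => hik (Fin.ext (congrArg Fin.val h').symm)),
          if_neg (by omega)]
        ring
    · intro h; exact absurd (mem_univ k) h
  · have hkl : (k : ℕ) < ℓ := k.isLt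
    set p : Fin ℓ := ⟨(k : ℕ) - 1, by omega⟩ with hp
    have hpk : p ≠ k := by
      intro h
      have := congrArg Fin.val h
      simp [hp] at this
      omega
    rw [if_pos hk]
    rw [← Finset.sum_subset (Finset.subset_univ ({p, k} : Finset (Fin ℓ)))]
    · rw [Finset.sum_pair hpk]
      have hpval : (p : ℕ) = (k : ℕ) - 1 := rfl
      have hterm_p : c p *
          (if (p : ℕ) = ℓ - 1 then (if k = p then 2 else 0)
            else ((if k = p then 1 else 0) + (if (k : ℕ) = (p : ℕ) + 1 then -1 else 0)))
          = -c p := by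
        rw [if_neg (by omega), if_neg (fun h => hpk (Fin.ext (congrArg Fin.val h).symm)),
          if_pos (by omega)]
        ring
      have hterm_k : c k *
          (if (k : ℕ) = ℓ - 1 then (if k = k then 2 else 0)
            else ((if k = k then 1 else 0) + (if (k : ℕ) = (k : ℕ) + 1 then -1 else 0)))
          = (if (k : ℕ) = ℓ - 1 then 2 else 1) * c k := by
        by_cases h : (k : ℕ) = ℓ - 1
        · rw [if_pos h, if_pos h, if_pos rfl]; ring
        · rw [if_neg h, if_neg h, if_pos rfl, if_neg (by omega)]; ring
      rw [hterm_p, hterm_k]; ring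
    · intro i _ hi
      simp only [Finset.mem_insert, Finset.mem_singleton] at hi
      push_neg at hi
      obtain ⟨hip, hik⟩ := hi
      have h1 : ¬ (k = i) := fun h => hik (Fin.ext (congrArg Fin.val h).symm)
      have h2 : (i : ℕ) ≠ (k : ℕ) - 1 := fun h => hip (Fin.ext h)
      by_cases h : (i : ℕ) = ℓ - 1
      · rw [if_pos h, if_neg h1, mul_zero]
      · rw [if_neg h, if_neg h1, if_neg (by omega)]; ring

lemma threshold (ℓ : ℕ) (lam : Fin ℓ → ℤ)
    (hdom : ∀ i j : Fin ℓ, i ≤ j → lam j ≤ lam i) :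
    ∃ t : ℕ, t ≤ ℓ ∧ ∀ k : Fin ℓ, (1 ≤ lam k ↔ (k : ℕ) < t) := by
  set s := univ.filter (fun k : Fin ℓ => 1 ≤ lam k) with hs
  refine ⟨s.card, le_trans (card_filter_le _ _) (by simp), fun k => ?_⟩
  constructor
  · intro hk
    have hsub : Finset.Iic k ⊆ s := by
      intro j hj
      rw [Finset.mem_Iic] at hj
      rw [hs, mem_filter]
      exact ⟨mem_univ _, le_trans hk (hdom j k hj)⟩
    have := Finset.card_le_card hsub
    rw [Fin.card_Iic] at this
    omega
  · intro hk
    by_contra hc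
    push_neg at hc
    have hsub : s ⊆ Finset.Iio k := by
      intro j hj
      rw [hs, mem_filter] at hj
      rw [Finset.mem_Iio]
      by_contra hj'
      push_neg at hj'
      exact absurd (le_trans hj.2 (hdom k j hj')) (by omega)
    have := Finset.card_le_card hsub
    rw [Fin.card_Iio] at this
    omega

lemma sum_indicator (ℓ t : ℕ) (ht : t ≤ ℓ) :
    (∑ k : Fin ℓ, (if (k : ℕ) < t then (1 : ℤ) else 0)) = t := by
  rw [Fin.sum_univ_eq_sum_range (fun n => if n < t then (1:ℤ) else 0) ℓ]
  rw [Finset.sum_ite, Finset.sum_const, Finset.sum_const]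
  have : (Finset.range ℓ).filter (fun n => n < t) = Finset.range t := by
    ext n; simp [Finset.mem_range, Finset.mem_filter]; omega
  rw [this]
  simp

def Lfun (ℓ : ℕ) (lam : Fin ℓ → ℤ) : ℕ → ℤ := fun n => if h : n < ℓ then lam ⟨n, h⟩ else 0
def Mfun : ℕ → ℤ := fun n => if n = 0 ∨ n = 1 then 2 else 0
def Sfun (ℓ : ℕ) (lam : Fin ℓ → ℤ) : ℕ → ℤ :=
  fun m => ∑ n ∈ Finset.range m, (Lfun ℓ lam n - Mfun n)

lemma Sfun_succ (ℓ : ℕ) (lam : Fin ℓ → ℤ) (m : ℕ) :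
    Sfun ℓ lam (m + 1) = Sfun ℓ lam m + (Lfun ℓ lam m - Mfun m) := by
  simp [Sfun, Finset.sum_range_succ]; ring

lemma Mfun_sum (ℓ : ℕ) (hℓ : 2 ≤ ℓ) : (∑ n ∈ Finset.range ℓ, Mfun n) = 4 := by
  have h : ∀ n, Mfun n = (if n = 0 then (2:ℤ) else 0) + (if n = 1 then (2:ℤ) else 0) := by
    intro n
    unfold Mfun
    by_cases h0 : n = 0
    · simp [h0]
    · by_cases h1 : n = 1 <;> simp [h0, h1]
  rw [Finset.sum_congr rfl (fun n _ => h n), Finset.sum_add_distrib,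
    Finset.sum_ite_eq' (Finset.range ℓ) 0 (fun _ => (2:ℤ)),
    Finset.sum_ite_eq' (Finset.range ℓ) 1 (fun _ => (2:ℤ))]
  rw [if_pos (Finset.mem_range.mpr (by omega)), if_pos (Finset.mem_range.mpr (by omega))]
  norm_num

lemma Lfun_sum (ℓ : ℕ) (lam : Fin ℓ → ℤ) :
    (∑ n ∈ Finset.range ℓ, Lfun ℓ lam n) = ∑ i : Fin ℓ, lam i := by
  rw [← Fin.sum_univ_eq_sum_range (Lfun ℓ lam) ℓ]
  exact Finset.sum_congr rfl (fun i _ => by simp [Lfun, i.isLt])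

lemma Sfun_nonneg (ℓ : ℕ) (hℓ : 2 ≤ ℓ) (lam : Fin ℓ → ℤ) (hpos : ∀ i, 0 ≤ lam i)
    (h0 : 2 ≤ lam ⟨0, by omega⟩) (h1 : 4 ≤ lam ⟨0, by omega⟩ + lam ⟨1, by omega⟩) :
    ∀ m, 1 ≤ m → m ≤ ℓ → 0 ≤ Sfun ℓ lam m := by
  have hS1 : Sfun ℓ lam 1 = lam ⟨0, by omega⟩ - 2 := by
    simp [Sfun, Lfun, Mfun, show 0 < ℓ by omega]
  have hS2 : Sfun ℓ lam 2 = lam ⟨0, by omega⟩ + lam ⟨1, by omega⟩ - 4 := by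
    rw [show Sfun ℓ lam 2 = Sfun ℓ lam (1+1) from rfl, Sfun_succ, hS1]
    simp [Lfun, Mfun, show 1 < ℓ by omega]
    ring
  have key : ∀ m, 2 ≤ m → m ≤ ℓ → 0 ≤ Sfun ℓ lam m := by
    intro m
    induction m with
    | zero => omega
    | succ n ih =>
      intro h2 hle
      rcases Nat.lt_or_ge n 2 with hn | hn
      · have : n + 1 = 2 := by omega
        rw [this, hS2]; omega
      · rw [Sfun_succ]
        have hnl : n < ℓ := by omega
        have hL : 0 ≤ Lfun ℓ lam n := by simp [Lfun, hnl]; exact hpos _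
        have hM : Mfun n = 0 := by simp [Mfun]; omega
        have := ih (by omega) (by omega)
        omega
  intro m h1m hml
  rcases Nat.lt_or_ge m 2 with hm | hm
  · have : m = 1 := by omega
    rw [this, hS1]; omega
  · exact key m hm hml

lemma exists_c (ℓ : ℕ) (hℓ : 2 ≤ ℓ) (lam : Fin ℓ → ℤ) (hpos : ∀ i, 0 ≤ lam i)
    (heven : Even (∑ i, lam i))
    (h0 : 2 ≤ lam ⟨0, by omega⟩) (h1 : 4 ≤ lam ⟨0, by omega⟩ + lam ⟨1, by omega⟩) :
    ∃ c : Fin ℓ → ℕ, ∀ k : Fin ℓ,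
        lam k - (if (k : ℕ) = 0 ∨ (k : ℕ) = 1 then 2 else 0) =
          ∑ i : Fin ℓ, (c i : ℤ) *
            (if (i : ℕ) = ℓ - 1 then (if k = i then 2 else 0)
              else ((if k = i then 1 else 0) +
                (if (k : ℕ) = (i : ℕ) + 1 then -1 else 0))) := by
  have hSnn := Sfun_nonneg ℓ hℓ lam hpos h0 h1
  have hSℓ : Sfun ℓ lam ℓ = (∑ i : Fin ℓ, lam i) - 4 := by
    simp [Sfun, Finset.sum_sub_distrib, Lfun_sum, Mfun_sum ℓ hℓ]
  have hSeven : (2 : ℤ) ∣ Sfun ℓ lam ℓ := by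
    rw [hSℓ]
    obtain ⟨r, hr⟩ := heven
    exact ⟨r - 2, by omega⟩
  set c : Fin ℓ → ℕ :=
    fun i => (if (i : ℕ) = ℓ - 1 then Sfun ℓ lam ℓ / 2 else Sfun ℓ lam ((i : ℕ) + 1)).toNat
    with hc
  have hcval : ∀ i : Fin ℓ, (c i : ℤ) =
      if (i : ℕ) = ℓ - 1 then Sfun ℓ lam ℓ / 2 else Sfun ℓ lam ((i : ℕ) + 1) := by
    intro i
    rw [hc]
    apply Int.toNat_of_nonneg
    by_cases h : (i : ℕ) = ℓ - 1
    · rw [if_pos h]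
      exact Int.ediv_nonneg (hSnn ℓ (by omega) le_rfl) (by norm_num)
    · rw [if_neg h]
      exact hSnn _ (by omega) i.isLt
  refine ⟨c, fun k => ?_⟩
  rw [sum_gamma ℓ hℓ (fun i => (c i : ℤ)) k]
  simp only [hcval]
  have hkl : (k : ℕ) < ℓ := k.isLt
  have hmu : (if (k : ℕ) = 0 ∨ (k : ℕ) = 1 then (2:ℤ) else 0) = Mfun (k : ℕ) := rfl
  have hLk : Lfun ℓ lam (k : ℕ) = lam k := by simp [Lfun, hkl]
  rcases Nat.eq_zero_or_pos (k : ℕ) with hk0 | hk0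
  · rw [hmu, if_neg (show ¬0 < (k : ℕ) by omega),
      if_neg (show ¬((k : ℕ) = ℓ - 1) by omega),
      if_neg (show ¬((k : ℕ) = ℓ - 1) by omega), Sfun_succ, hLk, hk0]
    simp [Sfun, Mfun]
  · rw [hmu, if_pos hk0]
    have hstep : Sfun ℓ lam ((k:ℕ)+1) = Sfun ℓ lam (k:ℕ) + (lam k - Mfun (k:ℕ)) := by
      rw [Sfun_succ, hLk]
    have hm1 : (k:ℕ) - 1 + 1 = (k:ℕ) := by omega
    by_cases hkl1 : (k:ℕ) = ℓ - 1
    · rw [if_pos hkl1, if_pos hkl1, if_neg (show ¬((k:ℕ)-1 = ℓ-1) by omega), hm1,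
        Int.mul_ediv_cancel' hSeven,
        congrArg (Sfun ℓ lam) (show ℓ = (k:ℕ)+1 by omega), hstep]
      ring
    · rw [if_neg hkl1, if_neg hkl1, if_neg (show ¬((k:ℕ)-1 = ℓ-1) by omega), hm1,
        one_mul, hstep]
      ring

lemma bounds_of_c (ℓ : ℕ) (hℓ : 2 ≤ ℓ) (lam : Fin ℓ → ℤ) (c : Fin ℓ → ℕ)
    (hc : ∀ k : Fin ℓ,
        lam k - (if (k : ℕ) = 0 ∨ (k : ℕ) = 1 then 2 else 0) =
          ∑ i : Fin ℓ, (c i : ℤ) *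
            (if (i : ℕ) = ℓ - 1 then (if k = i then 2 else 0)
              else ((if k = i then 1 else 0) +
                (if (k : ℕ) = (i : ℕ) + 1 then -1 else 0)))) :
    2 ≤ lam ⟨0, by omega⟩ ∧ 4 ≤ lam ⟨0, by omega⟩ + lam ⟨1, by omega⟩ := by
  have h0ℓ : 0 < ℓ := by omega
  have h1ℓ : 1 < ℓ := by omega
  set k0 : Fin ℓ := ⟨0, h0ℓ⟩ with hk0
  set k1 : Fin ℓ := ⟨1, h1ℓ⟩ with hk1
  have hv0 : (k0 : ℕ) = 0 := rfl
  have hv1 : (k1 : ℕ) = 1 := rfl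
  have e0 := hc k0
  rw [sum_gamma ℓ hℓ (fun i => (c i : ℤ)) k0] at e0
  rw [if_pos (Or.inl hv0), if_neg (show ¬(k0 : ℕ) = ℓ - 1 by omega),
    if_neg (show ¬0 < (k0 : ℕ) by omega), one_mul, sub_zero] at e0
  have e1 := hc k1
  rw [sum_gamma ℓ hℓ (fun i => (c i : ℤ)) k1] at e1
  rw [if_pos (Or.inr hv1), if_pos (show 0 < (k1 : ℕ) by omega)] at e1
  have hidx : (⟨(k1 : ℕ) - 1, lt_of_le_of_lt (Nat.sub_le _ _) k1.isLt⟩ : Fin ℓ) = k0 := rfl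
  rw [hidx] at e1
  have hc0 : (0:ℤ) ≤ (c k0 : ℤ) := Int.natCast_nonneg _
  have hc1 : (0:ℤ) ≤ (c k1 : ℤ) := Int.natCast_nonneg _
  by_cases h2 : (k1 : ℕ) = ℓ - 1
  · rw [if_pos h2] at e1
    constructor <;> omega
  · rw [if_neg h2, one_mul] at e1
    constructor <;> omega

lemma classify (ℓ : ℕ) (hℓ : 2 ≤ ℓ) (lam : Fin ℓ → ℤ)
    (hdom : ∀ i j : Fin ℓ, i ≤ j → lam j ≤ lam i) (hpos : ∀ i, 0 ≤ lam i)
    (heven : Even (∑ i, lam i))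
    (hsmall : lam ⟨0, by omega⟩ ≤ 1 ∨ lam ⟨0, by omega⟩ + lam ⟨1, by omega⟩ ≤ 3) :
    ((∃ j : ℕ, 2 * j ≤ ℓ ∧
        ∀ k : Fin ℓ, lam k = if (k : ℕ) < 2 * j then 1 else 0) ∨
      (∃ j : ℕ, 2 * j + 1 ≤ ℓ ∧
        ∀ k : Fin ℓ, lam k =
          if (k : ℕ) = 0 then 2 else if (k : ℕ) < 2 * j + 1 then 1 else 0)) := by
  have h0ℓ : 0 < ℓ := by omega
  have h1ℓ : 1 < ℓ := by omega
  set k0 : Fin ℓ := ⟨0, h0ℓ⟩ with hk0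
  set k1 : Fin ℓ := ⟨1, h1ℓ⟩ with hk1
  obtain ⟨t, htℓ, ht⟩ := threshold ℓ lam hdom
  by_cases hA : lam k0 ≤ 1
  · -- all entries ≤ 1
    have hall : ∀ k : Fin ℓ, lam k ≤ 1 := fun k =>
      le_trans (hdom k0 k (show (0:ℕ) ≤ (k:ℕ) from Nat.zero_le _)) hA
    have hform : ∀ k : Fin ℓ, lam k = if (k : ℕ) < t then 1 else 0 := by
      intro k
      by_cases h : (k : ℕ) < t
      · rw [if_pos h]
        exact le_antisymm (hall k) ((ht k).mpr h)
      · rw [if_neg h]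
        have h1 : ¬ 1 ≤ lam k := fun h' => h ((ht k).mp h')
        have := hpos k
        omega
    have hsum : (∑ i, lam i) = t := by
      rw [Finset.sum_congr rfl (fun k _ => hform k)]
      exact sum_indicator ℓ t htℓ
    rw [hsum] at heven
    obtain ⟨j, hj⟩ : ∃ j, t = 2 * j := by
      rcases Int.even_coe_nat t |>.mp heven with ⟨r, hr⟩
      exact ⟨r, by omega⟩
    exact Or.inl ⟨j, by omega, fun k => by rw [hform k, ← hj]⟩
  · -- lam k0 ≥ 2
    push_neg at hA
    have h01 : lam k1 ≤ lam k0 := hdom k0 k1 (show (0:ℕ) ≤ 1 from Nat.zero_le _)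
    have hp1 := hpos k1
    have hp0 := hpos k0
    have htail : ∀ k : Fin ℓ, (k : ℕ) ≠ 0 → lam k ≤ lam k1 := fun k hk =>
      hdom k1 k (show 1 ≤ (k:ℕ) by omega)
    by_cases hB : lam k0 = 2
    · -- second family
      have hl1 : lam k1 ≤ 1 := by rcases hsmall with h | h; omega; omega
      have ht0 : 0 < t := (ht k0).mp (by omega)
      have hform : ∀ k : Fin ℓ, (k : ℕ) ≠ 0 →
          lam k = if (k : ℕ) < t then 1 else 0 := by
        intro k hk
        by_cases h : (k : ℕ) < t
        · rw [if_pos h]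
          exact le_antisymm (le_trans (htail k hk) hl1) ((ht k).mpr h)
        · rw [if_neg h]
          have h1 : ¬ 1 ≤ lam k := fun h' => h ((ht k).mp h')
          have := hpos k
          omega
      have hform' : ∀ k : Fin ℓ, lam k =
          (if (k : ℕ) < t then (1:ℤ) else 0) + (if (k : ℕ) = 0 then 1 else 0) := by
        intro k
        by_cases hk : (k : ℕ) = 0
        · have hkk0 : k = k0 := Fin.ext hk
          rw [if_pos hk, if_pos (by omega), hkk0, hB]
          norm_num
        · rw [if_neg hk, add_zero]
          exact hform k hk
      have hsum : (∑ i, lam i) = t + 1 := by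
        rw [Finset.sum_congr rfl (fun k _ => hform' k), Finset.sum_add_distrib,
          sum_indicator ℓ t htℓ]
        have : (∑ k : Fin ℓ, if (k : ℕ) = 0 then (1:ℤ) else 0) = 1 := by
          rw [Finset.sum_eq_single k0]
          · simp; rfl
          · intro i _ hik
            exact if_neg (fun h => hik (Fin.ext h))
          · intro h; exact absurd (mem_univ k0) h
        rw [this]
      rw [hsum] at heven
      obtain ⟨j, hj⟩ : ∃ j, t = 2 * j + 1 := by
        rcases Int.even_coe_nat (t+1) |>.mp (by exact_mod_cast heven) with ⟨r, hr⟩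
        exact ⟨r - 1, by omega⟩
      refine Or.inr ⟨j, by omega, fun k => ?_⟩
      by_cases hk : (k : ℕ) = 0
      · rw [if_pos hk, show k = k0 from Fin.ext hk, hB]
      · rw [if_neg hk, ← hj]
        exact hform k hk
    · -- lam k0 ≥ 3 : contradiction with evenness / bound
      exfalso
      have hl3 : lam k0 = 3 := by rcases hsmall with h | h; omega; omega
      have hz : ∀ k : Fin ℓ, k ≠ k0 → lam k = 0 := by
        intro k hk
        have hkv : (k : ℕ) ≠ 0 := fun h => hk (Fin.ext h)
        have := htail k hkv
        have := hpos k
        rcases hsmall with h | h <;> omega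
      have hsum : (∑ i, lam i) = 3 := by
        rw [Finset.sum_eq_single k0 (fun i _ hik => hz i hik)
          (fun h => absurd (mem_univ k0) h), hl3]
      rw [hsum] at heven
      rcases heven with ⟨r, hr⟩
      omega

/-- For the root system of type `C_ℓ` realized in the lattice
`{(a_1,...,a_ℓ) ∈ ℤ^ℓ : Σ a_i even}` with simple roots `γ_i = e_i - e_{i+1}` (`i < ℓ-1`,
0-indexed) and `γ_{ℓ-1} = 2 e_{ℓ-1}`, the small dominant weights (those `λ` with
`λ ≱ 2γ₀`, for `γ₀ = e_0 + e_1` the highest short root, in the dominance order given by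
nonnegative integer combinations of simple roots) are exactly the weights
`(1^{2j} 0^{ℓ-2j})` for `0 ≤ 2j ≤ ℓ` and `(2, 1^{2j}, 0^{ℓ-2j-1})` for `0 ≤ 2j+1 ≤ ℓ`. -/
theorem stmt9 (ℓ : ℕ) (hℓ : 2 ≤ ℓ) (lam : Fin ℓ → ℤ)
    (hdom : ∀ i j : Fin ℓ, i ≤ j → lam j ≤ lam i) (hpos : ∀ i, 0 ≤ lam i)
    (heven : Even (∑ i, lam i)) :
    (¬ ∃ c : Fin ℓ → ℕ, ∀ k : Fin ℓ,
        lam k - (if (k : ℕ) = 0 ∨ (k : ℕ) = 1 then 2 else 0) =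
          ∑ i : Fin ℓ, (c i : ℤ) *
            (if (i : ℕ) = ℓ - 1 then (if k = i then 2 else 0)
              else ((if k = i then 1 else 0) +
                (if (k : ℕ) = (i : ℕ) + 1 then -1 else 0)))) ↔
    ((∃ j : ℕ, 2 * j ≤ ℓ ∧
        ∀ k : Fin ℓ, lam k = if (k : ℕ) < 2 * j then 1 else 0) ∨
      (∃ j : ℕ, 2 * j + 1 ≤ ℓ ∧
        ∀ k : Fin ℓ, lam k =
          if (k : ℕ) = 0 then 2 else if (k : ℕ) < 2 * j + 1 then 1 else 0)) := by
  have h0ℓ : 0 < ℓ := by omega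
  have h1ℓ : 1 < ℓ := by omega
  constructor
  · intro hne
    by_cases hbig : 2 ≤ lam ⟨0, h0ℓ⟩ ∧ 4 ≤ lam ⟨0, h0ℓ⟩ + lam ⟨1, h1ℓ⟩
    · exact absurd (exists_c ℓ hℓ lam hpos heven hbig.1 hbig.2) hne
    · apply classify ℓ hℓ lam hdom hpos heven
      have hp0 := hpos ⟨0, h0ℓ⟩
      have hp1 := hpos ⟨1, h1ℓ⟩
      rcases not_and_or.mp hbig with h | h
      · exact Or.inl (by omega)
      · exact Or.inr (by omega)
  · rintro hrhs ⟨c, hc⟩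
    have hb1 : 2 ≤ lam ⟨0, h0ℓ⟩ := (bounds_of_c ℓ hℓ lam c hc).1
    have hb2 : 4 ≤ lam ⟨0, h0ℓ⟩ + lam ⟨1, h1ℓ⟩ := (bounds_of_c ℓ hℓ lam c hc).2
    rcases hrhs with ⟨j, hj, hf⟩ | ⟨j, hj, hf⟩
    · have hle : lam ⟨0, h0ℓ⟩ ≤ 1 := by
        rw [hf ⟨0, h0ℓ⟩]
        split <;> norm_num
      omega
    · have h2 : lam ⟨0, h0ℓ⟩ = 2 := by
        rw [hf ⟨0, h0ℓ⟩, if_pos rfl]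
      have h3 : lam ⟨1, h1ℓ⟩ ≤ 1 := by
        rw [hf ⟨1, h1ℓ⟩, if_neg (by norm_num)]
        split <;> norm_num
      omega

end Stmt9Aux
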